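/- For every 3×3 real matrix R with Rᵀ * R = 1 and Matrix.det R = 1, there exists U in SU(2) such that π(U) = R; that is, π is surjective onto SO(3). -/

import Mathlib

open Matrix Complex

noncomputable def sigma : Fin 3 → Matrix (Fin 2) (Fin 2) ℂ :=
  ![!![0, 1; 1, 0], !![0, -Complex.I; Complex.I, 0], !![1, 0; 0, -1]]

abbrev SU2 := Matrix.specialUnitaryGroup (Fin 2) ℂ

noncomputable def piMap (U : Matrix (Fin 2) (Fin 2) ℂ) : Matrix (Fin 3) (Fin 3) ℝ :=
  Matrix.of fun i j => (((1 : ℂ) / 2) * Matrix.trace (sigma i * U * sigma j * Uᴴ)).re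

noncomputable def Umat (a b c d : ℝ) : Matrix (Fin 2) (Fin 2) ℂ :=
  !![(a : ℂ) - d * Complex.I, -c - b * Complex.I; (c : ℂ) - b * Complex.I, (a : ℂ) + d * Complex.I]

lemma Umat_mem (a b c d : ℝ) (h : a^2 + b^2 + c^2 + d^2 = 1) : Umat a b c d ∈ SU2 := by
  rw [Matrix.mem_specialUnitaryGroup_iff]
  constructor
  · rw [Matrix.mem_unitaryGroup_iff]
    ext i j
    fin_cases i <;> fin_cases j <;>
      · simp [Umat, Matrix.mul_apply, Fin.sum_univ_two, Matrix.star_apply, Matrix.one_apply]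
        rw [Complex.ext_iff]
        constructor <;> simp <;> nlinarith [h]
  · simp [Umat, Matrix.det_fin_two]
    rw [Complex.ext_iff]
    constructor <;> simp <;> nlinarith [h]

set_option maxHeartbeats 2000000 in
lemma piMap_Umat (a b c d : ℝ) :
    piMap (Umat a b c d) =
      !![a^2+b^2-c^2-d^2, 2*(b*c-a*d), 2*(b*d+a*c);
         2*(b*c+a*d), a^2-b^2+c^2-d^2, 2*(c*d-a*b);
         2*(b*d-a*c), 2*(c*d+a*b), a^2-b^2-c^2+d^2] := by
  have h00 : piMap (Umat a b c d) 0 0 = a^2+b^2-c^2-d^2 := by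
    simp [piMap, sigma, Umat, Matrix.trace_fin_two, Matrix.mul_apply, Fin.sum_univ_two,
      Matrix.conjTranspose_apply]; ring
  have h01 : piMap (Umat a b c d) 0 1 = 2*(b*c-a*d) := by
    simp [piMap, sigma, Umat, Matrix.trace_fin_two, Matrix.mul_apply, Fin.sum_univ_two,
      Matrix.conjTranspose_apply]; ring
  have h02 : piMap (Umat a b c d) 0 2 = 2*(b*d+a*c) := by
    simp [piMap, sigma, Umat, Matrix.trace_fin_two, Matrix.mul_apply, Fin.sum_univ_two,
      Matrix.conjTranspose_apply]; ring
  have h10 : piMap (Umat a b c d) 1 0 = 2*(b*c+a*d) := by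
    simp [piMap, sigma, Umat, Matrix.trace_fin_two, Matrix.mul_apply, Fin.sum_univ_two,
      Matrix.conjTranspose_apply]; ring
  have h11 : piMap (Umat a b c d) 1 1 = a^2-b^2+c^2-d^2 := by
    simp [piMap, sigma, Umat, Matrix.trace_fin_two, Matrix.mul_apply, Fin.sum_univ_two,
      Matrix.conjTranspose_apply]; ring
  have h12 : piMap (Umat a b c d) 1 2 = 2*(c*d-a*b) := by
    simp [piMap, sigma, Umat, Matrix.trace_fin_two, Matrix.mul_apply, Fin.sum_univ_two,
      Matrix.conjTranspose_apply]; ring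
  have h20 : piMap (Umat a b c d) 2 0 = 2*(b*d-a*c) := by
    simp [piMap, sigma, Umat, Matrix.trace_fin_two, Matrix.mul_apply, Fin.sum_univ_two,
      Matrix.conjTranspose_apply]; ring
  have h21 : piMap (Umat a b c d) 2 1 = 2*(c*d+a*b) := by
    simp [piMap, sigma, Umat, Matrix.trace_fin_two, Matrix.mul_apply, Fin.sum_univ_two,
      Matrix.conjTranspose_apply]; ring
  have h22 : piMap (Umat a b c d) 2 2 = a^2-b^2-c^2+d^2 := by
    simp [piMap, sigma, Umat, Matrix.trace_fin_two, Matrix.mul_apply, Fin.sum_univ_two,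
      Matrix.conjTranspose_apply]; ring
  rw [Matrix.eta_fin_three (piMap (Umat a b c d)), h00, h01, h02, h10, h11, h12, h20, h21, h22]


set_option maxHeartbeats 4000000 in
lemma caseA (R : Matrix (Fin 3) (Fin 3) ℝ) (horth : Rᵀ * R = 1)
    (hdet : Matrix.det R = 1) (htr : 0 ≤ R 0 0 + R 1 1 + R 2 2) :
    ∃ a b c d : ℝ, a^2 + b^2 + c^2 + d^2 = 1 ∧
      !![a^2+b^2-c^2-d^2, 2*(b*c-a*d), 2*(b*d+a*c);
         2*(b*c+a*d), a^2-b^2+c^2-d^2, 2*(c*d-a*b);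
         2*(b*d-a*c), 2*(c*d+a*b), a^2-b^2-c^2+d^2] = R := by
  have horth' : R * Rᵀ = 1 := mul_eq_one_comm.mp horth
  have hcol : ∀ i j, R 0 i * R 0 j + R 1 i * R 1 j + R 2 i * R 2 j = if i = j then 1 else 0 := by
    intro i j
    have := congrFun (congrFun horth i) j
    simpa [Matrix.mul_apply, Fin.sum_univ_three, Matrix.one_apply] using this
  have hrow : ∀ i j, R i 0 * R j 0 + R i 1 * R j 1 + R i 2 * R j 2 = if i = j then 1 else 0 := by
    intro i j
    have := congrFun (congrFun horth' i) j
    simpa [Matrix.mul_apply, Fin.sum_univ_three, Matrix.one_apply] using this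
  have hc00 := hcol 0 0; have hc01 := hcol 0 1; have hc02 := hcol 0 2
  have hc11 := hcol 1 1; have hc12 := hcol 1 2; have hc22 := hcol 2 2
  have hr00 := hrow 0 0; have hr01 := hrow 0 1; have hr02 := hrow 0 2
  have hr11 := hrow 1 1; have hr12 := hrow 1 2; have hr22 := hrow 2 2
  rw [if_pos rfl] at hc00 hc11 hc22 hr00 hr11 hr22
  rw [if_neg (by decide)] at hc01 hc02 hc12 hr01 hr02 hr12
  have hd3 : R 0 0 * (R 1 1 * R 2 2 - R 1 2 * R 2 1) - R 0 1 * (R 1 0 * R 2 2 - R 1 2 * R 2 0)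
      + R 0 2 * (R 1 0 * R 2 1 - R 1 1 * R 2 0) = 1 := by
    rw [Matrix.det_fin_three] at hdet; linarith [hdet]
  have hI1 : (R 2 1 - R 1 2)^2 = (1 + R 0 0 + R 1 1 + R 2 2) * (1 + R 0 0 - R 1 1 - R 2 2) := by
    linear_combination ((2)*R 1 2*R 2 1 + (-2)*R 1 1*R 2 2) * hc00 + ((-2)*R 1 2*R 2 0 + (2)*R 1 0*R 2 2) * hc01 + ((2)*R 1 1*R 2 0 + (-2)*R 1 0*R 2 1) * hc02 + ((1)) * hc11 + ((1)) * hc22 + ((-1)) * hr00 + ((2)*R 0 0) * hd3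
  have hI2 : (R 0 2 - R 2 0)^2 = (1 + R 0 0 + R 1 1 + R 2 2) * (1 - R 0 0 + R 1 1 - R 2 2) := by
    linear_combination ((-1) + R 1 2*R 1 2 + R 1 1*R 1 1 + R 0 2*R 0 2 + R 0 1*R 0 1) * hc00 + (R 2 0*R 2 1 + (-1)*R 1 0*R 1 1 + (-2)*R 0 2*R 2 1 + (2)*R 0 1*R 2 2 + (-1)*R 0 0*R 0 1) * hc01 + (R 2 0*R 2 2 + (-1)*R 1 0*R 1 2 + (-1)*R 0 0*R 0 2) * hc02 + ((-1) + (-1)*R 2 0*R 2 0 + R 1 2*R 1 2 + (2)*R 0 2*R 2 0 + R 0 2*R 0 2 + (-2)*R 0 0*R 2 2) * hc11 + (R 2 1*R 2 2 + (-1)*R 1 1*R 1 2 + (-2)*R 0 1*R 2 0 + (-1)*R 0 1*R 0 2 + (2)*R 0 0*R 2 1) * hc12 + ((1) + (-1)*R 2 1*R 2 1 + (-1)*R 2 0*R 2 0) * hc22 + ((2) + (-1)*R 1 2*R 1 2 + (-1)*R 1 1*R 1 1 + (-1)*R 1 0*R 1 0) * hr00 + (R 0 2*R 1 2 + R 0 1*R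 1 1 + R 0 0*R 1 0) * hr01 + ((2)*R 1 1) * hd3
  have hI3 : (R 1 0 - R 0 1)^2 = (1 + R 0 0 + R 1 1 + R 2 2) * (1 - R 0 0 - R 1 1 + R 2 2) := by
    linear_combination ((2) + (-1)*R 1 2*R 1 2 + (-1)*R 1 1*R 1 1 + (-1)*R 0 2*R 0 2 + (-1)*R 0 1*R 0 1) * hc00 + ((-1)*R 2 0*R 2 1 + R 1 0*R 1 1 + R 0 0*R 0 1) * hc01 + ((-1)*R 2 0*R 2 2 + R 1 0*R 1 2 + (2)*R 0 2*R 1 1 + (-2)*R 0 1*R 1 2 + R 0 0*R 0 2) * hc02 + ((1) + R 2 0*R 2 0 + (-1)*R 1 2*R 1 2 + (-1)*R 0 2*R 0 2) * hc11 + ((-1)*R 2 1*R 2 2 + R 1 1*R 1 2 + (-2)*R 0 2*R 1 0 + R 0 1*R 0 2 + (2)*R 0 0*R 1 2) * hc12 + ((-1) + R 2 1*R 2 1 + R 2 0*R 2 0 + (2)*R 0 1*R 1 0 + (-2)*R 0 0*R 1 1) * hc22 + ((-1) + R 1 2*R 1 2 + R 1 1*R 1 1 + R 1 0*R 1 0)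 * hr00 + ((-1)*R 0 2*R 1 2 + (-1)*R 0 1*R 1 1 + (-1)*R 0 0*R 1 0) * hr01 + ((2)*R 2 2) * hd3
  have hI4 : (R 2 1 - R 1 2) * (R 0 2 - R 2 0) = (1 + R 0 0 + R 1 1 + R 2 2) * (R 0 1 + R 1 0) := by
    linear_combination ((-1)*R 0 2*R 2 1 + R 0 1*R 2 2) * hc00 + ((-1) + R 1 2*R 2 1 + (-1)*R 1 1*R 2 2 + R 0 2*R 2 0 + (-1)*R 0 0*R 2 2) * hc01 + ((-1)*R 0 1*R 2 0 + R 0 0*R 2 1) * hc02 + ((-1)*R 1 2*R 2 0 + R 1 0*R 2 2) * hc11 + (R 1 1*R 2 0 + (-1)*R 1 0*R 2 1) * hc12 + ((-1)) * hr01 + (R 1 0 + R 0 1) * hd3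
  have hI5 : (R 2 1 - R 1 2) * (R 1 0 - R 0 1) = (1 + R 0 0 + R 1 1 + R 2 2) * (R 0 2 + R 2 0) := by
    linear_combination (R 0 2*R 1 1 + (-1)*R 0 1*R 1 2) * hc00 + ((-1)*R 0 2*R 1 0 + R 0 0*R 1 2) * hc01 + ((-1) + R 1 2*R 2 1 + (-1)*R 1 1*R 2 2 + R 0 1*R 1 0 + (-1)*R 0 0*R 1 1) * hc02 + ((-1)*R 1 2*R 2 0 + R 1 0*R 2 2) * hc12 + (R 1 1*R 2 0 + (-1)*R 1 0*R 2 1) * hc22 + ((-1)) * hr02 + (R 2 0 + R 0 2) * hd3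
  have hI6 : (R 0 2 - R 2 0) * (R 1 0 - R 0 1) = (1 + R 0 0 + R 1 1 + R 2 2) * (R 1 2 + R 2 1) := by
    linear_combination (R 1 2*R 2 2 + R 1 1*R 2 1) * hc00 + ((-1)*R 1 1*R 2 0 + (-1)*R 1 0*R 2 1 + R 0 2*R 1 1 + (-1)*R 0 1*R 1 2) * hc01 + ((-1)*R 1 2*R 2 0 + (-1)*R 1 0*R 2 2 + (-1)*R 0 2*R 2 1 + R 0 1*R 2 2) * hc02 + (R 1 2*R 2 2 + R 1 0*R 2 0 + (-1)*R 0 2*R 1 0 + R 0 0*R 1 2) * hc11 + ((-1) + (-1)*R 1 2*R 2 1 + (-1)*R 1 1*R 2 2 + R 0 2*R 2 0 + R 0 1*R 1 0 + (-1)*R 0 0*R 2 2 + (-1)*R 0 0*R 1 1) * hc12 + (R 1 1*R 2 1 + R 1 0*R 2 0 + (-1)*R 0 1*R 2 0 + R 0 0*R 2 1) * hc22 + ((-1)*R 1 2*R 2 2 + (-1)*R 1 1*R 2 1 + (-1)*R 1 0*R 2 0) * hr00 + (R 0 2*R 2 2 + R 0 1*R 2 1 + R 0 0*R 2 0) * hr01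 + (R 2 1 + R 1 2) * hd3
  have htpos : (0:ℝ) < 1 + R 0 0 + R 1 1 + R 2 2 := by linarith
  set s := Real.sqrt (1 + R 0 0 + R 1 1 + R 2 2) with hsdef
  have hs : s^2 = 1 + R 0 0 + R 1 1 + R 2 2 := Real.sq_sqrt htpos.le
  have hs0 : s ≠ 0 := by
    intro h; rw [h] at hs; simp at hs; linarith
  have e00 : (s/2)^2 + ((R 2 1 - R 1 2)/(2*s))^2 - ((R 0 2 - R 2 0)/(2*s))^2 - ((R 1 0 - R 0 1)/(2*s))^2 = R 0 0 := by
    field_simp; linear_combination hI1 - hI2 - hI3 + (s^2 + 1 - 3*R 0 0 + R 1 1 + R 2 2) * hs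
  have e01 : 2*((R 2 1 - R 1 2)/(2*s) * ((R 0 2 - R 2 0)/(2*s)) - (s/2) * ((R 1 0 - R 0 1)/(2*s))) = R 0 1 := by
    field_simp; linear_combination hI4 - (R 0 1 + R 1 0) * hs
  have e02 : 2*((R 2 1 - R 1 2)/(2*s) * ((R 1 0 - R 0 1)/(2*s)) + (s/2) * ((R 0 2 - R 2 0)/(2*s))) = R 0 2 := by
    field_simp; linear_combination hI5 - (R 0 2 + R 2 0) * hs
  have e10 : 2*((R 2 1 - R 1 2)/(2*s) * ((R 0 2 - R 2 0)/(2*s)) + (s/2) * ((R 1 0 - R 0 1)/(2*s))) = R 1 0 := by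
    field_simp; linear_combination hI4 - (R 0 1 + R 1 0) * hs
  have e11 : (s/2)^2 - ((R 2 1 - R 1 2)/(2*s))^2 + ((R 0 2 - R 2 0)/(2*s))^2 - ((R 1 0 - R 0 1)/(2*s))^2 = R 1 1 := by
    field_simp; linear_combination -hI1 + hI2 - hI3 + (s^2 + 1 + R 0 0 - 3*R 1 1 + R 2 2) * hs
  have e12 : 2*((R 0 2 - R 2 0)/(2*s) * ((R 1 0 - R 0 1)/(2*s)) - (s/2) * ((R 2 1 - R 1 2)/(2*s))) = R 1 2 := by
    field_simp; linear_combination hI6 - (R 1 2 + R 2 1) * hs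
  have e20 : 2*((R 2 1 - R 1 2)/(2*s) * ((R 1 0 - R 0 1)/(2*s)) - (s/2) * ((R 0 2 - R 2 0)/(2*s))) = R 2 0 := by
    field_simp; linear_combination hI5 - (R 0 2 + R 2 0) * hs
  have e21 : 2*((R 0 2 - R 2 0)/(2*s) * ((R 1 0 - R 0 1)/(2*s)) + (s/2) * ((R 2 1 - R 1 2)/(2*s))) = R 2 1 := by
    field_simp; linear_combination hI6 - (R 1 2 + R 2 1) * hs
  have e22 : (s/2)^2 - ((R 2 1 - R 1 2)/(2*s))^2 - ((R 0 2 - R 2 0)/(2*s))^2 + ((R 1 0 - R 0 1)/(2*s))^2 = R 2 2 := by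
    field_simp; linear_combination -hI1 - hI2 + hI3 + (s^2 + 1 + R 0 0 + R 1 1 - 3*R 2 2) * hs
  have enorm : (s/2)^2 + ((R 2 1 - R 1 2)/(2*s))^2 + ((R 0 2 - R 2 0)/(2*s))^2 + ((R 1 0 - R 0 1)/(2*s))^2 = 1 := by
    field_simp; linear_combination hI1 + hI2 + hI3 + (s^2 - 3 + R 0 0 + R 1 1 + R 2 2) * hs
  exact ⟨s/2, (R 2 1 - R 1 2)/(2*s), (R 0 2 - R 2 0)/(2*s), (R 1 0 - R 0 1)/(2*s), enorm, by
    ext i j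
    fin_cases i <;> fin_cases j <;> simp <;> [exact e00; exact e01; exact e02; exact e10; exact e11; exact e12; exact e20; exact e21; exact e22]⟩


set_option maxHeartbeats 2000000 in
theorem stmt14 (R : Matrix (Fin 3) (Fin 3) ℝ) (horth : Rᵀ * R = 1)
    (hdet : Matrix.det R = 1) :
    ∃ U : SU2, piMap (U : Matrix (Fin 2) (Fin 2) ℂ) = R := by
  have hmax : 0 ≤ R 0 0 + R 1 1 + R 2 2 ∨ 0 ≤ R 0 0 - R 1 1 - R 2 2 ∨
      0 ≤ -R 0 0 + R 1 1 - R 2 2 ∨ 0 ≤ -R 0 0 - R 1 1 + R 2 2 := by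
    by_contra h; push_neg at h; obtain ⟨u1, u2, u3, u4⟩ := h; linarith
  rcases hmax with htr | htr | htr | htr
  · obtain ⟨a, b, c, d, hnorm, hmat⟩ := caseA R horth hdet htr
    exact ⟨⟨Umat a b c d, Umat_mem _ _ _ _ hnorm⟩, by rw [piMap_Umat]; exact hmat⟩
  ·
    set E : Matrix (Fin 3) (Fin 3) ℝ := !![1,0,0; 0,-1,0; 0,0,-1] with hEdef
    have hET : Eᵀ = E := by
      ext i j; fin_cases i <;> fin_cases j <;> rfl
    have hEE : Eᵀ * E = 1 := by
      rw [hET]; ext i j; fin_cases i <;> fin_cases j <;>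
        simp [hEdef, Matrix.mul_apply, Fin.sum_univ_three, Matrix.one_apply, Matrix.vecHead, Matrix.vecTail]
    have h1 : (E * R)ᵀ * (E * R) = 1 := by
      rw [Matrix.transpose_mul, Matrix.mul_assoc, ← Matrix.mul_assoc Eᵀ, hEE, Matrix.one_mul, horth]
    have h2 : (E * R).det = 1 := by
      rw [Matrix.det_mul, hdet, mul_one]
      simp [Matrix.det_fin_three, hEdef]
    have hent : ∀ i j, (E * R) i j = E i i * R i j := by
      intro i j; fin_cases i <;> simp [hEdef, Matrix.mul_apply, Fin.sum_univ_three]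
    have h3 : 0 ≤ (E * R) 0 0 + (E * R) 1 1 + (E * R) 2 2 := by
      rw [hent 0 0, hent 1 1, hent 2 2]; simp [hEdef]; linarith
    obtain ⟨a, b, c, d, hnorm, hmat⟩ := caseA (E * R) h1 h2 h3
    have m00 : a^2+b^2-c^2-d^2 = (R 0 0) := by
      have h := congrFun (congrFun hmat 0) 0
      rw [hent 0 0] at h; simpa [hEdef] using h
    have m01 : 2*(b*c-a*d) = (R 0 1) := by
      have h := congrFun (congrFun hmat 0) 1
      rw [hent 0 1] at h; simpa [hEdef] using h
    have m02 : 2*(b*d+a*c) = (R 0 2) := by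
      have h := congrFun (congrFun hmat 0) 2
      rw [hent 0 2] at h; simpa [hEdef] using h
    have m10 : 2*(b*c+a*d) = -(R 1 0) := by
      have h := congrFun (congrFun hmat 1) 0
      rw [hent 1 0] at h; simpa [hEdef] using h
    have m11 : a^2-b^2+c^2-d^2 = -(R 1 1) := by
      have h := congrFun (congrFun hmat 1) 1
      rw [hent 1 1] at h; simpa [hEdef] using h
    have m12 : 2*(c*d-a*b) = -(R 1 2) := by
      have h := congrFun (congrFun hmat 1) 2
      rw [hent 1 2] at h; simpa [hEdef] using h
    have m20 : 2*(b*d-a*c) = -(R 2 0) := by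
      have h := congrFun (congrFun hmat 2) 0
      rw [hent 2 0] at h; simpa [hEdef] using h
    have m21 : 2*(c*d+a*b) = -(R 2 1) := by
      have h := congrFun (congrFun hmat 2) 1
      rw [hent 2 1] at h; simpa [hEdef] using h
    have m22 : a^2-b^2-c^2+d^2 = -(R 2 2) := by
      have h := congrFun (congrFun hmat 2) 2
      rw [hent 2 2] at h; simpa [hEdef] using h
    refine ⟨⟨Umat (b) (-a) (d) (-c), Umat_mem _ _ _ _ (by linear_combination hnorm)⟩, ?_⟩
    show piMap (Umat _ _ _ _) = R
    rw [piMap_Umat]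
    ext i j
    fin_cases i <;> fin_cases j <;> simp <;>
      [linear_combination (1 : ℝ) * m00; linear_combination (1 : ℝ) * m01; linear_combination (1 : ℝ) * m02; linear_combination (-1 : ℝ) * m10; linear_combination (-1 : ℝ) * m11; linear_combination (-1 : ℝ) * m12; linear_combination (-1 : ℝ) * m20; linear_combination (-1 : ℝ) * m21; linear_combination (-1 : ℝ) * m22]
  ·
    set E : Matrix (Fin 3) (Fin 3) ℝ := !![-1,0,0; 0,1,0; 0,0,-1] with hEdef
    have hET : Eᵀ = E := by
      ext i j; fin_cases i <;> fin_cases j <;> rfl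
    have hEE : Eᵀ * E = 1 := by
      rw [hET]; ext i j; fin_cases i <;> fin_cases j <;>
        simp [hEdef, Matrix.mul_apply, Fin.sum_univ_three, Matrix.one_apply, Matrix.vecHead, Matrix.vecTail]
    have h1 : (E * R)ᵀ * (E * R) = 1 := by
      rw [Matrix.transpose_mul, Matrix.mul_assoc, ← Matrix.mul_assoc Eᵀ, hEE, Matrix.one_mul, horth]
    have h2 : (E * R).det = 1 := by
      rw [Matrix.det_mul, hdet, mul_one]
      simp [Matrix.det_fin_three, hEdef]
    have hent : ∀ i j, (E * R) i j = E i i * R i j := by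
      intro i j; fin_cases i <;> simp [hEdef, Matrix.mul_apply, Fin.sum_univ_three]
    have h3 : 0 ≤ (E * R) 0 0 + (E * R) 1 1 + (E * R) 2 2 := by
      rw [hent 0 0, hent 1 1, hent 2 2]; simp [hEdef]; linarith
    obtain ⟨a, b, c, d, hnorm, hmat⟩ := caseA (E * R) h1 h2 h3
    have m00 : a^2+b^2-c^2-d^2 = -(R 0 0) := by
      have h := congrFun (congrFun hmat 0) 0
      rw [hent 0 0] at h; simpa [hEdef] using h
    have m01 : 2*(b*c-a*d) = -(R 0 1) := by
      have h := congrFun (congrFun hmat 0) 1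
      rw [hent 0 1] at h; simpa [hEdef] using h
    have m02 : 2*(b*d+a*c) = -(R 0 2) := by
      have h := congrFun (congrFun hmat 0) 2
      rw [hent 0 2] at h; simpa [hEdef] using h
    have m10 : 2*(b*c+a*d) = (R 1 0) := by
      have h := congrFun (congrFun hmat 1) 0
      rw [hent 1 0] at h; simpa [hEdef] using h
    have m11 : a^2-b^2+c^2-d^2 = (R 1 1) := by
      have h := congrFun (congrFun hmat 1) 1
      rw [hent 1 1] at h; simpa [hEdef] using h
    have m12 : 2*(c*d-a*b) = (R 1 2) := by
      have h := congrFun (congrFun hmat 1) 2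
      rw [hent 1 2] at h; simpa [hEdef] using h
    have m20 : 2*(b*d-a*c) = -(R 2 0) := by
      have h := congrFun (congrFun hmat 2) 0
      rw [hent 2 0] at h; simpa [hEdef] using h
    have m21 : 2*(c*d+a*b) = -(R 2 1) := by
      have h := congrFun (congrFun hmat 2) 1
      rw [hent 2 1] at h; simpa [hEdef] using h
    have m22 : a^2-b^2-c^2+d^2 = -(R 2 2) := by
      have h := congrFun (congrFun hmat 2) 2
      rw [hent 2 2] at h; simpa [hEdef] using h
    refine ⟨⟨Umat (c) (-d) (-a) (b), Umat_mem _ _ _ _ (by linear_combination hnorm)⟩, ?_⟩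
    show piMap (Umat _ _ _ _) = R
    rw [piMap_Umat]
    ext i j
    fin_cases i <;> fin_cases j <;> simp <;>
      [linear_combination (-1 : ℝ) * m00; linear_combination (-1 : ℝ) * m01; linear_combination (-1 : ℝ) * m02; linear_combination (1 : ℝ) * m10; linear_combination (1 : ℝ) * m11; linear_combination (1 : ℝ) * m12; linear_combination (-1 : ℝ) * m20; linear_combination (-1 : ℝ) * m21; linear_combination (-1 : ℝ) * m22]
  ·
    set E : Matrix (Fin 3) (Fin 3) ℝ := !![-1,0,0; 0,-1,0; 0,0,1] with hEdef
    have hET : Eᵀ = E := by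
      ext i j; fin_cases i <;> fin_cases j <;> rfl
    have hEE : Eᵀ * E = 1 := by
      rw [hET]; ext i j; fin_cases i <;> fin_cases j <;>
        simp [hEdef, Matrix.mul_apply, Fin.sum_univ_three, Matrix.one_apply, Matrix.vecHead, Matrix.vecTail]
    have h1 : (E * R)ᵀ * (E * R) = 1 := by
      rw [Matrix.transpose_mul, Matrix.mul_assoc, ← Matrix.mul_assoc Eᵀ, hEE, Matrix.one_mul, horth]
    have h2 : (E * R).det = 1 := by
      rw [Matrix.det_mul, hdet, mul_one]
      simp [Matrix.det_fin_three, hEdef]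
    have hent : ∀ i j, (E * R) i j = E i i * R i j := by
      intro i j; fin_cases i <;> simp [hEdef, Matrix.mul_apply, Fin.sum_univ_three]
    have h3 : 0 ≤ (E * R) 0 0 + (E * R) 1 1 + (E * R) 2 2 := by
      rw [hent 0 0, hent 1 1, hent 2 2]; simp [hEdef]; linarith
    obtain ⟨a, b, c, d, hnorm, hmat⟩ := caseA (E * R) h1 h2 h3
    have m00 : a^2+b^2-c^2-d^2 = -(R 0 0) := by
      have h := congrFun (congrFun hmat 0) 0
      rw [hent 0 0] at h; simpa [hEdef] using h
    have m01 : 2*(b*c-a*d) = -(R 0 1) := by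
      have h := congrFun (congrFun hmat 0) 1
      rw [hent 0 1] at h; simpa [hEdef] using h
    have m02 : 2*(b*d+a*c) = -(R 0 2) := by
      have h := congrFun (congrFun hmat 0) 2
      rw [hent 0 2] at h; simpa [hEdef] using h
    have m10 : 2*(b*c+a*d) = -(R 1 0) := by
      have h := congrFun (congrFun hmat 1) 0
      rw [hent 1 0] at h; simpa [hEdef] using h
    have m11 : a^2-b^2+c^2-d^2 = -(R 1 1) := by
      have h := congrFun (congrFun hmat 1) 1
      rw [hent 1 1] at h; simpa [hEdef] using h
    have m12 : 2*(c*d-a*b) = -(R 1 2) := by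
      have h := congrFun (congrFun hmat 1) 2
      rw [hent 1 2] at h; simpa [hEdef] using h
    have m20 : 2*(b*d-a*c) = (R 2 0) := by
      have h := congrFun (congrFun hmat 2) 0
      rw [hent 2 0] at h; simpa [hEdef] using h
    have m21 : 2*(c*d+a*b) = (R 2 1) := by
      have h := congrFun (congrFun hmat 2) 1
      rw [hent 2 1] at h; simpa [hEdef] using h
    have m22 : a^2-b^2-c^2+d^2 = (R 2 2) := by
      have h := congrFun (congrFun hmat 2) 2
      rw [hent 2 2] at h; simpa [hEdef] using h
    refine ⟨⟨Umat (d) (c) (-b) (-a), Umat_mem _ _ _ _ (by linear_combination hnorm)⟩, ?_⟩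
    show piMap (Umat _ _ _ _) = R
    rw [piMap_Umat]
    ext i j
    fin_cases i <;> fin_cases j <;> simp <;>
      [linear_combination (-1 : ℝ) * m00; linear_combination (-1 : ℝ) * m01; linear_combination (-1 : ℝ) * m02; linear_combination (-1 : ℝ) * m10; linear_combination (-1 : ℝ) * m11; linear_combination (-1 : ℝ) * m12; linear_combination (1 : ℝ) * m20; linear_combination (1 : ℝ) * m21; linear_combination (1 : ℝ) * m22]
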